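/- Let V be a finite-dimensional vector space over a non-Archimedean field, with four ultrametric norms ‖·‖₀, ‖·‖₁, ‖·‖₀', ‖·‖₁' such that ‖·‖₀, ‖·‖₁ are diagonalized by a common basis, and ‖·‖₀', ‖·‖₁' are diagonalized by a common basis. If ‖·‖₀' ≤ ‖·‖₀ pointwise and ‖·‖₁' ≤ ‖·‖₁ pointwise, then for all t ∈ [0,1] the geodesic norms satisfy ‖·‖ₜ' ≤ ‖·‖ₜ pointwise (monotonicity of norm geodesics with respect to endpoints). -/

import Mathlib

/-- The ultrametric norm on `V` diagonalized by the basis `b`, with values `w i` on the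
basis vectors: `N (∑ aᵢ sᵢ) = maxᵢ |aᵢ| · w i`. -/
noncomputable def diagNorm {K V ι : Type*} [NontriviallyNormedField K]
    [AddCommGroup V] [Module K V] [Fintype ι] [Nonempty ι]
    (b : Module.Basis ι K V) (w : ι → ℝ) (v : V) : ℝ :=
  Finset.univ.sup' Finset.univ_nonempty fun i => ‖b.repr v i‖ * w i

set_option linter.unusedSectionVars false
section aux
variable {K V ι : Type*} [NontriviallyNormedField K] [IsUltrametricDist K]
    [AddCommGroup V] [Module K V] [Fintype ι] [Nonempty ι]
    (b : Module.Basis ι K V) (w : ι → ℝ)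

lemma diagNorm_nonneg (hw : ∀ i, 0 ≤ w i) (v : V) : 0 ≤ diagNorm b w v := by
  obtain ⟨i⟩ := ‹Nonempty ι›
  refine le_trans ?_ (Finset.le_sup' _ (Finset.mem_univ i))
  exact mul_nonneg (norm_nonneg _) (hw i)

lemma diagNorm_add_le (hw : ∀ i, 0 ≤ w i) (x y : V) :
    diagNorm b w (x + y) ≤ max (diagNorm b w x) (diagNorm b w y) := by
  unfold diagNorm
  refine Finset.sup'_le _ _ fun i _ => ?_
  have h : ‖b.repr (x + y) i‖ ≤ max ‖b.repr x i‖ ‖b.repr y i‖ := by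
    rw [map_add, Finsupp.add_apply]
    exact IsUltrametricDist.norm_add_le_max _ _
  calc ‖b.repr (x + y) i‖ * w i ≤ max ‖b.repr x i‖ ‖b.repr y i‖ * w i :=
        mul_le_mul_of_nonneg_right h (hw i)
    _ = max (‖b.repr x i‖ * w i) (‖b.repr y i‖ * w i) := max_mul_of_nonneg _ _ (hw i)
    _ ≤ _ := max_le_max
        (Finset.le_sup' (fun j => ‖b.repr x j‖ * w j) (Finset.mem_univ i))
        (Finset.le_sup' (fun j => ‖b.repr y j‖ * w j) (Finset.mem_univ i))

lemma diagNorm_smul_le (c : K) (v : V) :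
    diagNorm b w (c • v) ≤ ‖c‖ * diagNorm b w v := by
  unfold diagNorm
  refine Finset.sup'_le _ _ fun i _ => ?_
  rw [map_smul, Finsupp.smul_apply, smul_eq_mul, norm_mul, mul_assoc]
  exact mul_le_mul_of_nonneg_left
    (Finset.le_sup' (fun j => ‖b.repr v j‖ * w j) (Finset.mem_univ i)) (norm_nonneg c)

lemma diagNorm_basis_le (hw : ∀ i, 0 ≤ w i) (i : ι) : diagNorm b w (b i) ≤ w i := by
  refine Finset.sup'_le _ _ fun j _ => ?_
  rw [Module.Basis.repr_self]
  rcases eq_or_ne j i with rfl | h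
  · simp
  · simp only [Finsupp.single_eq_of_ne h, norm_zero, zero_mul]
    exact hw i

lemma diagNorm_sum_le {N : V → ℝ} (hN : ∀ x y, N (x + y) ≤ max (N x) (N y))
    (s : Finset ι) (hs : s.Nonempty) (f : ι → V) :
    N (∑ i ∈ s, f i) ≤ s.sup' hs fun i => N (f i) := by
  induction s using Finset.cons_induction with
  | empty => exact absurd hs (by simp)
  | cons a s ha ih =>
    rcases s.eq_empty_or_nonempty with rfl | hs'
    · simp
    · rw [Finset.sum_cons, Finset.sup'_cons hs']
      exact (hN _ _).trans (max_le_max le_rfl (ih hs'))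

end aux

/-- Monotonicity of norm geodesics with respect to endpoints: if `N₀' ≤ N₀` and `N₁' ≤ N₁`
pointwise (each pair being codiagonalized by a basis), then the geodesic norms satisfy
`Nₜ' ≤ Nₜ` pointwise for all `t ∈ [0,1]`. -/
theorem stmt_1 {K V ι ι' : Type*} [NontriviallyNormedField K] [IsUltrametricDist K]
    [AddCommGroup V] [Module K V] [Fintype ι] [Nonempty ι] [Fintype ι'] [Nonempty ι']
    (b : Module.Basis ι K V) (b' : Module.Basis ι' K V)
    (w0 w1 : ι → ℝ) (w0' w1' : ι' → ℝ)
    (hw0 : ∀ i, 0 < w0 i) (hw1 : ∀ i, 0 < w1 i)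
    (hw0' : ∀ i, 0 < w0' i) (hw1' : ∀ i, 0 < w1' i)
    (h0 : ∀ v, diagNorm b' w0' v ≤ diagNorm b w0 v)
    (h1 : ∀ v, diagNorm b' w1' v ≤ diagNorm b w1 v) :
    ∀ t ∈ Set.Icc (0:ℝ) 1, ∀ v,
      diagNorm b' (fun i => w0' i ^ (1 - t) * w1' i ^ t) v
        ≤ diagNorm b (fun i => w0 i ^ (1 - t) * w1 i ^ t) v := by
  rintro t ⟨ht0, ht1⟩ v
  have h1t : (0:ℝ) ≤ 1 - t := by linarith
  set wt' := fun i => w0' i ^ (1 - t) * w1' i ^ t with hwt'def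
  have hwt' : ∀ i, 0 ≤ wt' i := fun i =>
    mul_nonneg (Real.rpow_nonneg (hw0' i).le _) (Real.rpow_nonneg (hw1' i).le _)
  -- key estimate on basis vectors of `b`
  have key : ∀ i, diagNorm b' wt' (b i) ≤ w0 i ^ (1 - t) * w1 i ^ t := by
    intro i
    set A := diagNorm b' w0' (b i) with hA_def
    set B := diagNorm b' w1' (b i) with hB_def
    have hA0 : 0 ≤ A := diagNorm_nonneg _ _ (fun j => (hw0' j).le) _
    have hB0 : 0 ≤ B := diagNorm_nonneg _ _ (fun j => (hw1' j).le) _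
    have hA : A ≤ w0 i := (h0 _).trans (diagNorm_basis_le b w0 (fun j => (hw0 j).le) i)
    have hB : B ≤ w1 i := (h1 _).trans (diagNorm_basis_le b w1 (fun j => (hw1 j).le) i)
    have hstep : diagNorm b' wt' (b i) ≤ A ^ (1 - t) * B ^ t := by
      refine Finset.sup'_le _ _ fun j _ => ?_
      set c := ‖b'.repr (b i) j‖ with hc_def
      have hc : 0 ≤ c := norm_nonneg _
      have hcA : c * w0' j ≤ A :=
        Finset.le_sup' (fun j => ‖b'.repr (b i) j‖ * w0' j) (Finset.mem_univ j)
      have hcB : c * w1' j ≤ B :=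
        Finset.le_sup' (fun j => ‖b'.repr (b i) j‖ * w1' j) (Finset.mem_univ j)
      rcases eq_or_lt_of_le hc with h | h
      · rw [← h, zero_mul]
        exact mul_nonneg (Real.rpow_nonneg hA0 _) (Real.rpow_nonneg hB0 _)
      · have hcc : c = c ^ (1 - t) * c ^ t := by
          rw [← Real.rpow_add h, sub_add_cancel, Real.rpow_one]
        calc c * wt' j = (c ^ (1 - t) * c ^ t) * (w0' j ^ (1 - t) * w1' j ^ t) := by
              rw [← hcc]
          _ = (c * w0' j) ^ (1 - t) * (c * w1' j) ^ t := by
              rw [Real.mul_rpow hc (hw0' j).le, Real.mul_rpow hc (hw1' j).le]; ring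
          _ ≤ A ^ (1 - t) * B ^ t :=
              mul_le_mul (Real.rpow_le_rpow (mul_nonneg hc (hw0' j).le) hcA h1t)
                (Real.rpow_le_rpow (mul_nonneg hc (hw1' j).le) hcB ht0)
                (Real.rpow_nonneg (mul_nonneg hc (hw1' j).le) _) (Real.rpow_nonneg hA0 _)
    refine hstep.trans ?_
    exact mul_le_mul (Real.rpow_le_rpow hA0 hA h1t) (Real.rpow_le_rpow hB0 hB ht0)
      (Real.rpow_nonneg hB0 _) (Real.rpow_nonneg (le_trans hA0 hA) _)
  calc diagNorm b' wt' v = diagNorm b' wt' (∑ i, b.repr v i • b i) := by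
        rw [Module.Basis.sum_repr]
    _ ≤ Finset.univ.sup' Finset.univ_nonempty
          (fun i => diagNorm b' wt' (b.repr v i • b i)) :=
        diagNorm_sum_le (diagNorm_add_le b' wt' hwt') _ _ _
    _ ≤ diagNorm b (fun i => w0 i ^ (1 - t) * w1 i ^ t) v := by
        refine Finset.sup'_le _ _ fun i _ => ?_
        refine le_trans ((diagNorm_smul_le b' wt' _ _).trans
          (mul_le_mul_of_nonneg_left (key i) (norm_nonneg _))) ?_
        exact Finset.le_sup' (fun i => ‖b.repr v i‖ * (w0 i ^ (1 - t) * w1 i ^ t))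
          (Finset.mem_univ i)
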